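/- Let A = (Q, δ, I, F) be an NFA over a finite alphabet Σ and let μ : Σ* → [0,∞) be summable with D(L) = ∑_{w∈L} μ(w). For every state q ∈ Q, the three pruning labellings are ordered: ∑_{q' ∈ F ∩ reach({q})} D(B_A(q')) ≥ D(B_A(F ∩ reach({q}))) ≥ D(B_A(q)·L_A(q)), where B_A(S) = ⋃_{q'∈S} B_A(q') for a set of states S. -/

import Mathlib

/-- `langWeight μ L` is `D(L) = ∑_{w ∈ L} μ(w)`. -/
noncomputable def langWeight {α : Type*} (μ : List α → ℝ) (L : Set (List α)) : ℝ :=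
  ∑' w : L, μ (w : List α)

/-- The banguage of a state `q`: words over which some run from an initial
state of `A` ends in `q`. -/
def bang {α σ : Type*} (A : NFA α σ) (q : σ) : Set (List α) :=
  {w | q ∈ A.eval w}

/-- The language of a state `q`: words over which some run from `q` ends in an
accepting state of `A`. -/
def langOf {α σ : Type*} (A : NFA α σ) (q : σ) : Set (List α) :=
  {w | ∃ qf ∈ A.accept, qf ∈ A.evalFrom {q} w}

/-- Concatenation of two languages. -/
def concatLang {α : Type*} (K L : Set (List α)) : Set (List α) :=
  {w | ∃ u ∈ K, ∃ v ∈ L, w = u ++ v}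

/-- The set of states reachable from a set of states `R`. -/
def reach {α σ : Type*} (A : NFA α σ) (R : Set σ) : Set σ :=
  {q' | ∃ w : List α, q' ∈ A.evalFrom R w}

lemma evalFrom_mono {α σ : Type*} (A : NFA α σ) {S T : Set σ} (h : S ⊆ T) (w : List α) :
    A.evalFrom S w ⊆ A.evalFrom T w := by
  induction w generalizing S T with
  | nil => simpa using h
  | cons a w ih =>
    have hstep : A.stepSet S a ⊆ A.stepSet T a := by
      intro x hx
      rw [NFA.mem_stepSet] at hx ⊢
      obtain ⟨t, ht, hx⟩ := hx
      exact ⟨t, h ht, hx⟩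
    exact ih hstep

lemma evalFrom_append {α σ : Type*} (A : NFA α σ) (S : Set σ) (u v : List α) :
    A.evalFrom S (u ++ v) = A.evalFrom (A.evalFrom S u) v := by
  simp [NFA.evalFrom, List.foldl_append]

lemma langWeight_eq {α : Type*} (μ : List α → ℝ) (hμ0 : ∀ w, 0 ≤ μ w) (hμ : Summable μ)
    (L : Set (List α)) :
    (∑' w : L, ENNReal.ofReal (μ (w : List α))) = ENNReal.ofReal (langWeight μ L) := by
  rw [langWeight]
  exact (ENNReal.ofReal_tsum_of_nonneg (fun w : L => hμ0 w) (hμ.subtype L)).symm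

lemma langWeight_nonneg {α : Type*} (μ : List α → ℝ) (hμ0 : ∀ w, 0 ≤ μ w)
    (L : Set (List α)) : 0 ≤ langWeight μ L :=
  tsum_nonneg fun w => hμ0 w

/-- The three pruning labellings are ordered:
`ℓ¹_p(q) = ∑_{q' ∈ F ∩ reach({q})} D(B_A(q'))`
`≥ ℓ²_p(q) = D(B_A(F ∩ reach({q})))`
`≥ ℓ³_p(q) = D(B_A(q)·L_A(q))`. -/
theorem pruning_labels_ordered {α σ : Type*} [Fintype α] [Fintype σ]
    (A : NFA α σ) (μ : List α → ℝ) (hμ0 : ∀ w, 0 ≤ μ w) (hμ : Summable μ)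
    (q : σ) :
    langWeight μ (⋃ q' ∈ A.accept ∩ reach A {q}, bang A q') ≤
      (∑' q' : (A.accept ∩ reach A {q} : Set σ), langWeight μ (bang A (q' : σ))) ∧
    langWeight μ (concatLang (bang A q) (langOf A q)) ≤
      langWeight μ (⋃ q' ∈ A.accept ∩ reach A {q}, bang A q') := by
  classical
  set S : Set σ := A.accept ∩ reach A {q} with hS
  set g : List α → ENNReal := fun w => ENNReal.ofReal (μ w) with hg
  constructor
  · -- union bound
    have h1 : (∑' w : ⋃ q' ∈ S, bang A q', g (w : List α)) ≤
        ∑' q' : S, ∑' w : bang A (q' : σ), g (w : List α) :=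
      ENNReal.tsum_biUnion_le_tsum g S (fun q' => bang A q')
    rw [langWeight_eq μ hμ0 hμ] at h1
    have h2 : (∑' q' : S, ∑' w : bang A (q' : σ), g (w : List α)) =
        ENNReal.ofReal (∑' q' : S, langWeight μ (bang A (q' : σ))) := by
      rw [ENNReal.ofReal_tsum_of_nonneg (fun q' => langWeight_nonneg μ hμ0 _)
        (Summable.of_finite)]
      exact tsum_congr fun q' => langWeight_eq μ hμ0 hμ _
    rw [h2] at h1
    exact (ENNReal.ofReal_le_ofReal_iff
      (tsum_nonneg fun q' => langWeight_nonneg μ hμ0 _)).mp h1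
  · -- subset bound
    have hsub : concatLang (bang A q) (langOf A q) ⊆ ⋃ q' ∈ S, bang A q' := by
      rintro w ⟨u, hu, v, ⟨qf, hqf, hqfv⟩, rfl⟩
      have hreach : qf ∈ reach A {q} := ⟨v, hqfv⟩
      have hbang : u ++ v ∈ bang A qf := by
        have : A.evalFrom {q} v ⊆ A.evalFrom (A.eval u) v :=
          evalFrom_mono A (by simpa using (show q ∈ A.eval u from hu)) v
        have := this hqfv
        rw [bang, Set.mem_setOf_eq, NFA.eval, evalFrom_append]
        exact this
      exact Set.mem_biUnion ⟨hqf, hreach⟩ hbang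
    have h1 : (∑' w : concatLang (bang A q) (langOf A q), g (w : List α)) ≤
        ∑' w : ⋃ q' ∈ S, bang A q', g (w : List α) :=
      ENNReal.tsum_mono_subtype g hsub
    rw [langWeight_eq μ hμ0 hμ, langWeight_eq μ hμ0 hμ] at h1
    exact (ENNReal.ofReal_le_ofReal_iff (langWeight_nonneg μ hμ0 _)).mp h1
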